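/- Let T > 0, n ≥ 1 an integer, δ = T/n, and t_i = i·δ for i = 0, …, n. Let d ≥ 1, C ≥ 0, and let L : ℝ × ℝ^d → ℝ satisfy |L(s, x) − L(t, x)| ≤ C·|s − t|^{1/2} for all s, t, x, and |L(t, x) − L(t, y)| ≤ C·‖x − y‖ for all t, x, y. Let X : ℝ → ℝ^d be continuous on [0, T] and suppose that for every i ∈ {0, …, n−1} and every s ∈ [t_i, t_{i+1}], ‖X(s) − X(t_i)‖ ≤ C·(s − t_i)^{1/2}. Then |∑_{i=0}^{n−1} L(t_i, X(t_i))·δ − ∫_0^T L(s, X(s)) ds| ≤ (2/3)·C·(1 + C)·T·δ^{1/2}. -/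

import Mathlib

set_option maxHeartbeats 1000000

/-- Auxiliary per-interval estimate. -/
lemma riemann_aux_interval (C : ℝ) (g : ℝ → ℝ) (a δ : ℝ) (hδ : 0 < δ) (c : ℝ)
    (hCC : 0 ≤ C * (1 + C))
    (hgi : IntervalIntegrable g MeasureTheory.volume a (a + δ))
    (hpt : ∀ s ∈ Set.Icc a (a + δ), |c - g s| ≤ C * (1 + C) * Real.sqrt (s - a)) :
    |c * δ - ∫ s in a..(a + δ), g s| ≤ C * (1 + C) * (2/3) * (δ * Real.sqrt δ) := by
  have hab : a ≤ a + δ := by linarith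
  have hci : IntervalIntegrable (fun _ : ℝ => c) MeasureTheory.volume a (a + δ) :=
    intervalIntegrable_const
  have hbdcont : ContinuousOn (fun s => C * (1 + C) * Real.sqrt (s - a)) (Set.uIcc a (a + δ)) :=
    (continuous_const.mul
      ((Real.continuous_sqrt).comp (continuous_id.sub continuous_const))).continuousOn
  have hbdint : IntervalIntegrable (fun s => C * (1 + C) * Real.sqrt (s - a))
      MeasureTheory.volume a (a + δ) := hbdcont.intervalIntegrable
  have hsqrtint : (∫ s in a..(a + δ), Real.sqrt (s - a)) = 2/3 * (δ * Real.sqrt δ) := by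
    have h0 : (∫ s in a..(a + δ), Real.sqrt (s - a)) = ∫ u in (a - a)..(a + δ - a), Real.sqrt u := by
      rw [intervalIntegral.integral_comp_sub_right (fun u => Real.sqrt u) a]
    rw [h0, show a - a = (0:ℝ) by ring, show a + δ - a = δ by ring]
    have hcongr : Set.EqOn (fun u : ℝ => Real.sqrt u) (fun u : ℝ => u ^ (1/2 : ℝ))
        (Set.uIcc (0:ℝ) δ) := fun u _ => Real.sqrt_eq_rpow u
    rw [intervalIntegral.integral_congr hcongr,
      integral_rpow (Or.inl (by norm_num : (-1:ℝ) < 1/2))]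
    rw [Real.zero_rpow (by norm_num), show (1/2 : ℝ) + 1 = 3/2 by norm_num]
    rw [show (3/2 : ℝ) = 1 + 1/2 by norm_num, Real.rpow_add hδ, Real.rpow_one,
      ← Real.sqrt_eq_rpow]
    ring
  have hbdval : (∫ s in a..(a + δ), C * (1 + C) * Real.sqrt (s - a))
      = C * (1 + C) * (2/3) * (δ * Real.sqrt δ) := by
    rw [intervalIntegral.integral_const_mul, hsqrtint]; ring
  have hcval : c * δ = ∫ _s in a..(a + δ), c := by
    rw [intervalIntegral.integral_const]
    simp only [smul_eq_mul]
    ring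
  rw [hcval, ← intervalIntegral.integral_sub hci hgi]
  calc |∫ s in a..(a + δ), (c - g s)|
      ≤ ∫ s in a..(a + δ), |c - g s| :=
        intervalIntegral.abs_integral_le_integral_abs hab
    _ ≤ ∫ s in a..(a + δ), C * (1 + C) * Real.sqrt (s - a) :=
        intervalIntegral.integral_mono_on hab (hci.sub hgi).abs hbdint hpt
    _ = C * (1 + C) * (2/3) * (δ * Real.sqrt δ) := hbdval

/-- Pathwise Riemann-sum error bound of order `√δ`: if `L` is 1/2-Hölder in
time and Lipschitz in state, and the path increments on each grid interval
satisfy `‖X s - X t_i‖ ≤ C √(s - t_i)`, then the left-endpoint Riemann sum on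
the uniform grid with mesh `δ = T/n` approximates `∫₀ᵀ L(s, X s) ds` with
error at most `(2/3) C (1 + C) T √δ`. -/
theorem riemann_sum_error_bound (T : ℝ) (hT : 0 < T) (n : ℕ) (hn : 1 ≤ n)
    (d : ℕ) (hd : 1 ≤ d) (C : ℝ) (hC : 0 ≤ C)
    (L : ℝ → EuclideanSpace ℝ (Fin d) → ℝ)
    (hHolder : ∀ s t x, |L s x - L t x| ≤ C * Real.sqrt |s - t|)
    (hLip : ∀ t x y, |L t x - L t y| ≤ C * ‖x - y‖)
    (X : ℝ → EuclideanSpace ℝ (Fin d)) (hX : ContinuousOn X (Set.Icc 0 T))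
    (hincr : ∀ i < n, ∀ s ∈ Set.Icc ((i : ℝ) * (T / n)) (((i : ℝ) + 1) * (T / n)),
      ‖X s - X ((i : ℝ) * (T / n))‖ ≤ C * Real.sqrt (s - (i : ℝ) * (T / n))) :
    |(∑ i ∈ Finset.range n,
        L ((i : ℝ) * (T / n)) (X ((i : ℝ) * (T / n))) * (T / n)) -
        ∫ s in (0 : ℝ)..T, L s (X s)| ≤
      2 / 3 * C * (1 + C) * T * Real.sqrt (T / n) := by
  have hn0 : (0:ℝ) < (n:ℝ) := by exact_mod_cast Nat.lt_of_lt_of_le Nat.zero_lt_one hn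
  set δ : ℝ := T / n with hδdef
  have hδ : 0 < δ := div_pos hT hn0
  have hnδ : (n:ℝ) * δ = T := by rw [hδdef]; field_simp
  set g : ℝ → ℝ := fun s => L s (X s) with hg
  -- continuity of g on [0,T]
  have hgcont : ContinuousOn g (Set.Icc 0 T) := by
    intro a ha
    rw [Metric.continuousWithinAt_iff]
    intro ε hε
    have hE : 0 < ε / (2 * (C + 1)) := by positivity
    set E := ε / (2 * (C + 1)) with hEdef
    obtain ⟨d1, hd1, hX1⟩ := Metric.continuousWithinAt_iff.1 (hX a ha) E hE
    refine ⟨min d1 (E ^ 2), by positivity, fun y hy hdy => ?_⟩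
    have hdy1 : dist y a < d1 := lt_of_lt_of_le hdy (min_le_left _ _)
    have hdy2 : dist y a < E ^ 2 := lt_of_lt_of_le hdy (min_le_right _ _)
    have hXb : ‖X y - X a‖ < E := by
      have := hX1 hy hdy1
      rwa [dist_eq_norm] at this
    have h1 : |L y (X y) - L y (X a)| ≤ C * E :=
      le_trans (hLip y _ _) (mul_le_mul_of_nonneg_left hXb.le hC)
    have h2 : |L y (X a) - L a (X a)| ≤ C * E := by
      refine le_trans (hHolder y a (X a)) (mul_le_mul_of_nonneg_left ?_ hC)
      have : |y - a| ≤ E ^ 2 := by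
        rw [Real.dist_eq] at hdy2; exact hdy2.le
      calc Real.sqrt |y - a| ≤ Real.sqrt (E ^ 2) := Real.sqrt_le_sqrt this
        _ = E := Real.sqrt_sq hE.le
    have : dist (g y) (g a) ≤ 2 * (C * E) := by
      rw [Real.dist_eq]
      have hsplit : g y - g a = (L y (X y) - L y (X a)) + (L y (X a) - L a (X a)) := by
        simp only [hg]; ring
      calc |g y - g a| = |(L y (X y) - L y (X a)) + (L y (X a) - L a (X a))| := by
            rw [hsplit]
        _ ≤ |L y (X y) - L y (X a)| + |L y (X a) - L a (X a)| := abs_add_le _ _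
        _ ≤ 2 * (C * E) := by linarith
    have hlt : 2 * (C * E) < ε := by
      have heq : 2 * (C * E) = C / (C + 1) * ε := by
        rw [hEdef]; field_simp
      have hfrac : C / (C + 1) < 1 := (div_lt_one (by positivity)).2 (by linarith)
      rw [heq]; nlinarith
    exact lt_of_le_of_lt this hlt
  -- each grid interval is inside [0,T]
  have hsub : ∀ i < n, Set.uIcc ((i:ℝ)*δ) (((i:ℝ)+1)*δ) ⊆ Set.Icc 0 T := by
    intro i hi
    have hi0 : (0:ℝ) ≤ (i:ℝ) := Nat.cast_nonneg i
    have hi1 : ((i:ℝ)+1) ≤ (n:ℝ) := by exact_mod_cast hi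
    rw [Set.uIcc_of_le (by nlinarith)]
    intro s hs
    refine ⟨by nlinarith [hs.1], ?_⟩
    have := hs.2
    nlinarith
  have hgint : ∀ i < n, IntervalIntegrable g MeasureTheory.volume ((i:ℝ)*δ) (((i:ℝ)+1)*δ) :=
    fun i hi => (hgcont.mono (hsub i hi)).intervalIntegrable
  -- splitting the integral
  have hadj : ∀ k < n, IntervalIntegrable g MeasureTheory.volume
      ((fun k : ℕ => (k:ℝ)*δ) k) ((fun k : ℕ => (k:ℝ)*δ) (k+1)) := by
    intro k hk
    simp only [Nat.cast_add, Nat.cast_one]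
    exact hgint k hk
  have hsplit := intervalIntegral.sum_integral_adjacent_intervals hadj
  simp only [Nat.cast_add, Nat.cast_one, Nat.cast_zero, zero_mul] at hsplit
  rw [hnδ] at hsplit
  -- the key per-interval estimate
  have key : ∀ i ∈ Finset.range n,
      |L ((i:ℝ)*δ) (X ((i:ℝ)*δ)) * δ - ∫ s in ((i:ℝ)*δ)..(((i:ℝ)+1)*δ), g s|
        ≤ C * (1 + C) * (2/3) * (δ * Real.sqrt δ) := by
    intro i hi
    rw [Finset.mem_range] at hi
    have ht1 : ((i:ℝ)+1)*δ = (i:ℝ)*δ + δ := by ring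
    rw [ht1]
    refine riemann_aux_interval C g ((i:ℝ)*δ) δ hδ _ (by positivity) (by
      rw [← ht1]; exact hgint i hi) ?_
    intro s hs
    have hst : (i:ℝ)*δ ≤ s := hs.1
    have hsI : s ∈ Set.Icc ((i:ℝ)*δ) (((i:ℝ)+1)*δ) := by rw [ht1]; exact hs
    have h1 : |L ((i:ℝ)*δ) (X ((i:ℝ)*δ)) - L s (X ((i:ℝ)*δ))|
        ≤ C * Real.sqrt (s - (i:ℝ)*δ) := by
      have habs : |s - (i:ℝ)*δ| = s - (i:ℝ)*δ := abs_of_nonneg (by linarith)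
      have := hHolder ((i:ℝ)*δ) s (X ((i:ℝ)*δ))
      rwa [abs_sub_comm ((i:ℝ)*δ) s, habs] at this
    have h2 : |L s (X ((i:ℝ)*δ)) - L s (X s)| ≤ C * (C * Real.sqrt (s - (i:ℝ)*δ)) := by
      refine le_trans (hLip s _ _) (mul_le_mul_of_nonneg_left ?_ hC)
      rw [norm_sub_rev]
      exact hincr i hi s hsI
    have hsplit2 : L ((i:ℝ)*δ) (X ((i:ℝ)*δ)) - g s
        = (L ((i:ℝ)*δ) (X ((i:ℝ)*δ)) - L s (X ((i:ℝ)*δ)))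
          + (L s (X ((i:ℝ)*δ)) - L s (X s)) := by
      simp only [hg]; ring
    calc |L ((i:ℝ)*δ) (X ((i:ℝ)*δ)) - g s|
        ≤ |L ((i:ℝ)*δ) (X ((i:ℝ)*δ)) - L s (X ((i:ℝ)*δ))|
          + |L s (X ((i:ℝ)*δ)) - L s (X s)| := by rw [hsplit2]; exact abs_add_le _ _
      _ ≤ C * Real.sqrt (s - (i:ℝ)*δ) + C * (C * Real.sqrt (s - (i:ℝ)*δ)) := add_le_add h1 h2
      _ = C * (1 + C) * Real.sqrt (s - (i:ℝ)*δ) := by ring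
  -- assemble
  rw [← hsplit, ← Finset.sum_sub_distrib]
  calc |∑ i ∈ Finset.range n, (L ((i:ℝ)*δ) (X ((i:ℝ)*δ)) * δ -
          ∫ s in ((i:ℝ)*δ)..(((i:ℝ)+1)*δ), g s)|
      ≤ ∑ i ∈ Finset.range n, |L ((i:ℝ)*δ) (X ((i:ℝ)*δ)) * δ -
          ∫ s in ((i:ℝ)*δ)..(((i:ℝ)+1)*δ), g s| := Finset.abs_sum_le_sum_abs _ _
    _ ≤ ∑ _i ∈ Finset.range n, C * (1 + C) * (2/3) * (δ * Real.sqrt δ) :=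
        Finset.sum_le_sum key
    _ = (n:ℝ) * (C * (1 + C) * (2/3) * (δ * Real.sqrt δ)) := by
        rw [Finset.sum_const, Finset.card_range, nsmul_eq_mul]
    _ = 2 / 3 * C * (1 + C) * ((n:ℝ) * δ) * Real.sqrt δ := by ring
    _ = 2 / 3 * C * (1 + C) * T * Real.sqrt δ := by rw [hnδ]
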